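/- Let K, K' ⊆ ℝ₊ⁿ be anti-blocking bodies. Then Vol(K − K') = Σ_E Vol_{dim E}(P_E K) · Vol_{n−dim E}(P_{E⊥} K'), summing over all coordinate subspaces E of ℝⁿ (with the convention that the 0-dimensional volume of a nonempty set is 1). -/

import Mathlib

open Set MeasureTheory Pointwise
open scoped RealInnerProductSpace

/-- A convex body `K ⊆ ℝ₊ⁿ` (compact, convex, containing `0`) is anti-blocking if
for all `y ∈ K` and `x ∈ ℝ₊ⁿ` with `x ≤ y` coordinatewise, `x ∈ K`. -/
def IsAntiBlocking (n : ℕ) (K : Set (EuclideanSpace ℝ (Fin n))) : Prop :=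
  IsCompact K ∧ Convex ℝ K ∧ (0 : EuclideanSpace ℝ (Fin n)) ∈ K ∧
    (∀ y ∈ K, ∀ i, (0:ℝ) ≤ y i) ∧
    ∀ y ∈ K, ∀ x : EuclideanSpace ℝ (Fin n),
      (∀ i, 0 ≤ x i) → (∀ i, x i ≤ y i) → x ∈ K

/-- Restriction of a vector to the coordinates in `S`, viewed as a point of the
Euclidean space indexed by `S`; this realizes the orthogonal projection onto the
coordinate subspace `E = span{e i : i ∈ S}` inside that subspace. -/
def restrictTo {n : ℕ} (S : Finset (Fin n)) (x : EuclideanSpace ℝ (Fin n)) :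
    EuclideanSpace ℝ {i : Fin n // i ∈ S} :=
  WithLp.toLp 2 (fun i => x i.val)

private def piece {n : ℕ} (K K' : Set (EuclideanSpace ℝ (Fin n))) (S : Finset (Fin n)) :
    Set (EuclideanSpace ℝ (Fin n)) :=
  {z | restrictTo S z ∈ restrictTo S '' K ∧ restrictTo Sᶜ (-z) ∈ restrictTo Sᶜ '' K'}

private lemma continuous_restrictTo {n : ℕ} (S : Finset (Fin n)) :
    Continuous (restrictTo (n := n) S) :=
  (PiLp.continuous_toLp 2 _).comp (continuous_pi fun i => PiLp.continuous_apply 2 _ i.val)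

private lemma hyperplane_null {n : ℕ} (i : Fin n) :
    volume {z : EuclideanSpace ℝ (Fin n) | z i = 0} = 0 := by
  have : {z : EuclideanSpace ℝ (Fin n) | z i = 0} =
      (LinearMap.ker ((EuclideanSpace.proj i : EuclideanSpace ℝ (Fin n) →L[ℝ] ℝ) :
        EuclideanSpace ℝ (Fin n) →ₗ[ℝ] ℝ) : Submodule ℝ _) := by
    ext z; simp [LinearMap.mem_ker]
  rw [this]
  apply Measure.addHaar_submodule
  rw [Ne, LinearMap.ker_eq_top]
  intro h
  have := congrFun (congrArg (fun f : EuclideanSpace ℝ (Fin n) →ₗ[ℝ] ℝ => f.toFun) h)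
    (EuclideanSpace.single i (1:ℝ))
  simp at this

private lemma sub_eq_iUnion {n : ℕ} {K K' : Set (EuclideanSpace ℝ (Fin n))}
    (hK : IsAntiBlocking n K) (hK' : IsAntiBlocking n K') :
    K - K' = ⋃ S : Finset (Fin n), piece K K' S := by
  obtain ⟨-, -, -, hKpos, hKab⟩ := hK
  obtain ⟨-, -, -, hK'pos, hK'ab⟩ := hK'
  ext z
  simp only [mem_iUnion, Set.mem_sub, piece, mem_setOf_eq]
  constructor
  · rintro ⟨x, hx, y, hy, hxy⟩
    classical
    refine ⟨Finset.univ.filter (fun i => 0 ≤ z i), ?_, ?_⟩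
    · refine ⟨(WithLp.toLp 2 (fun i => if 0 ≤ z i then z i else 0) : EuclideanSpace ℝ (Fin n)), ?_, ?_⟩
      · refine hKab x hx _ (fun i => ?_) (fun i => ?_)
        · dsimp only; split <;> simp_all
        · dsimp only; split
          · have : z i = x i - y i := by rw [← hxy]; rfl
            have := hK'pos y hy i
            linarith
          · exact hKpos x hx i
      · ext i
        have hi : 0 ≤ z i.val := (Finset.mem_filter.mp i.property).2
        simp [restrictTo, hi]
    · refine ⟨(WithLp.toLp 2 (fun i => if 0 ≤ z i then 0 else -z i) : EuclideanSpace ℝ (Fin n)), ?_, ?_⟩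
      · refine hK'ab y hy _ (fun i => ?_) (fun i => ?_)
        · dsimp only; split <;> [simp; linarith [lt_of_not_ge (by assumption)]]
        · dsimp only
          have hz : z i = x i - y i := by rw [← hxy]; rfl
          split
          · exact hK'pos y hy i
          · have := hKpos x hx i; linarith [hz]
      · ext i
        have hi : ¬ 0 ≤ z i.val := by
          have := i.property
          simpa [Finset.mem_filter] using Finset.mem_compl.mp this
        simp [restrictTo, hi]
  · rintro ⟨S, ⟨x, hx, hxz⟩, ⟨y, hy, hyz⟩⟩
    classical
    refine ⟨(WithLp.toLp 2 (fun i => if i ∈ S then x i else 0) : EuclideanSpace ℝ (Fin n)),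
      hKab x hx _ (fun i => ?_) (fun i => ?_),
      (WithLp.toLp 2 (fun i => if i ∈ S then 0 else y i) : EuclideanSpace ℝ (Fin n)),
      hK'ab y hy _ (fun i => ?_) (fun i => ?_), ?_⟩
    · dsimp only; split
      · exact hKpos x hx i
      · rfl
    · dsimp only; split
      · rfl
      · exact hKpos x hx i
    · dsimp only; split
      · rfl
      · exact hK'pos y hy i
    · dsimp only; split
      · exact hK'pos y hy i
      · rfl
    · ext i
      show (if i ∈ S then x i else 0) - (if i ∈ S then 0 else y i) = z i
      by_cases hi : i ∈ S
      · have : x i = z i := congrArg (fun v => v.ofLp ⟨i, hi⟩) hxz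
        simp [hi, this]
      · have : y i = -z i := congrArg (fun v => v.ofLp ⟨i, Finset.mem_compl.mpr hi⟩) hyz
        simp [hi, this]

private lemma vol_piece {n : ℕ} {K K' : Set (EuclideanSpace ℝ (Fin n))}
    (hK : IsCompact K) (hK' : IsCompact K') (S : Finset (Fin n)) :
    volume (piece K K' S) = volume (restrictTo S '' K) * volume (restrictTo Sᶜ '' K') := by
  classical
  set A : Set (EuclideanSpace ℝ {i : Fin n // i ∈ S}) := restrictTo S '' K with hAdef
  set B : Set (EuclideanSpace ℝ {i : Fin n // i ∈ Sᶜ}) := restrictTo Sᶜ '' K' with hBdef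
  have hA : IsCompact A := hK.image (continuous_restrictTo S)
  have hB : IsCompact B := hK'.image (continuous_restrictTo Sᶜ)
  let f : {i : Fin n // i ∈ Sᶜ} ≃ {i : Fin n // ¬ i ∈ S} :=
    Equiv.subtypeEquivRight (fun i => Finset.mem_compl)
  let eL : ({i : Fin n // i ∈ Sᶜ} → ℝ) ≃ᵐ ({i : Fin n // ¬ i ∈ S} → ℝ) :=
    MeasurableEquiv.piCongrLeft (fun _ => ℝ) f
  let eπ : (Fin n → ℝ) ≃ᵐ ({i : Fin n // i ∈ S} → ℝ) × ({i : Fin n // ¬ i ∈ S} → ℝ) :=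
    MeasurableEquiv.piEquivPiSubtypeProd (fun _ => ℝ) (· ∈ S)
  let E := (MeasurableEquiv.toLp 2 (Fin n → ℝ)).symm
  let A' : Set ({i : Fin n // i ∈ S} → ℝ) :=
    (MeasurableEquiv.toLp 2 ({i : Fin n // i ∈ S} → ℝ)) ⁻¹' A
  let B' : Set ({i : Fin n // i ∈ Sᶜ} → ℝ) :=
    (MeasurableEquiv.toLp 2 ({i : Fin n // i ∈ Sᶜ} → ℝ)) ⁻¹' B
  let T : Set ({i : Fin n // ¬ i ∈ S} → ℝ) := eL.symm ⁻¹' (-B')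
  have hA' : MeasurableSet A' := (MeasurableEquiv.measurableSet_preimage _).mpr hA.measurableSet
  have hB' : MeasurableSet B' := (MeasurableEquiv.measurableSet_preimage _).mpr hB.measurableSet
  have hT : MeasurableSet T := (MeasurableEquiv.measurableSet_preimage _).mpr hB'.neg
  have claim1 : piece K K' S = E ⁻¹' (eπ ⁻¹' (A' ×ˢ T)) := by
    ext z
    have h1 : eπ (E z) = ((fun i => z i.val), (fun i => z i.val)) := rfl
    simp only [piece, mem_setOf_eq, mem_preimage, h1, mem_prod]
    have h2 : ((fun i => z i.val) : {i : Fin n // i ∈ S} → ℝ) ∈ A' ↔ restrictTo S z ∈ A :=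
      Iff.rfl
    have h3 : ((fun i => z i.val) : {i : Fin n // ¬ i ∈ S} → ℝ) ∈ T ↔
        restrictTo Sᶜ (-z) ∈ B := by
      show eL.symm _ ∈ -B' ↔ _
      rw [Set.mem_neg]
      have : -(eL.symm (fun i => z i.val)) = (restrictTo Sᶜ (-z)).ofLp := by
        funext i
        show -(eL.symm (fun i : {i : Fin n // ¬ i ∈ S} => z i.val) i) = -(z i.val)
        congr 1
      rw [this]
      rfl
    rw [h2, h3]
  rw [claim1, ← Set.preimage_comp]
  have hmp :=
    (volume_preserving_piEquivPiSubtypeProd (fun _ : Fin n => ℝ) (· ∈ S)).comp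
      (EuclideanSpace.volume_preserving_symm_measurableEquiv_toLp (Fin n))
  rw [hmp.measure_preimage (hA'.prod hT).nullMeasurableSet]
  rw [Measure.volume_eq_prod, Measure.prod_prod]
  have hvT : volume T = volume B := by
    have e1 : volume T = volume (-B') :=
      ((volume_measurePreserving_piCongrLeft (fun _ => ℝ) f).symm eL).measure_preimage
        hB'.neg.nullMeasurableSet
    have e2 : volume (-B') = volume B' := Measure.measure_neg _ _
    have e3 : volume B' = volume B :=
      ((EuclideanSpace.volume_preserving_symm_measurableEquiv_toLp _).symm _).measure_preimage
        hB.measurableSet.nullMeasurableSet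
    rw [e1, e2, e3]
  rw [hvT]
  congr 1
  convert ((EuclideanSpace.volume_preserving_symm_measurableEquiv_toLp
      {i : Fin n // i ∈ S}).symm _).measure_preimage hA.measurableSet.nullMeasurableSet using 2
  congr!
  rfl

private lemma piece_measurable {n : ℕ} {K K' : Set (EuclideanSpace ℝ (Fin n))}
    (hK : IsCompact K) (hK' : IsCompact K') (S : Finset (Fin n)) :
    MeasurableSet (piece K K' S) := by
  have hA : IsCompact (restrictTo S '' K) := hK.image (continuous_restrictTo S)
  have hB : IsCompact (restrictTo Sᶜ '' K') := hK'.image (continuous_restrictTo Sᶜ)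
  exact (((continuous_restrictTo S).measurable hA.measurableSet)).inter
    (((continuous_restrictTo Sᶜ).comp continuous_neg).measurable hB.measurableSet)

private lemma piece_subset_hyperplane {n : ℕ} {K K' : Set (EuclideanSpace ℝ (Fin n))}
    (hK : IsAntiBlocking n K) (hK' : IsAntiBlocking n K') (S T : Finset (Fin n))
    (i : Fin n) (hiS : i ∈ S) (hiT : i ∉ T) :
    piece K K' S ∩ piece K K' T ⊆ {z | z i = 0} := by
  rintro z ⟨⟨hz1, -⟩, ⟨-, hz2⟩⟩
  obtain ⟨x, hx, hxz⟩ := hz1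
  obtain ⟨y, hy, hyz⟩ := hz2
  have h1 : (0:ℝ) ≤ z i := by
    have hxe : x i = z i := congrArg (fun v => v.ofLp (⟨i, hiS⟩ : {j : Fin n // j ∈ S})) hxz
    have := hK.2.2.2.1 x hx i
    linarith
  have h2 : (0:ℝ) ≤ -z i := by
    have hye : y i = -z i :=
      congrArg (fun v => v.ofLp (Subtype.mk i (Finset.mem_compl.mpr hiT) : {j : Fin n // j ∈ Tᶜ})) hyz
    have := hK'.2.2.2.1 y hy i
    linarith
  show z i = 0
  linarith

private lemma piece_aedisjoint {n : ℕ} {K K' : Set (EuclideanSpace ℝ (Fin n))}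
    (hK : IsAntiBlocking n K) (hK' : IsAntiBlocking n K') :
    Pairwise (Function.onFun (AEDisjoint volume) (piece K K')) := by
  intro S T hST
  have : ∃ i : Fin n, (i ∈ S ∧ i ∉ T) ∨ (i ∈ T ∧ i ∉ S) := by
    by_contra h
    push_neg at h
    exact hST (Finset.ext fun i => ⟨(h i).1, (h i).2⟩)
  obtain ⟨i, hi | hi⟩ := this
  · exact measure_mono_null (piece_subset_hyperplane hK hK' S T i hi.1 hi.2)
      (hyperplane_null i)
  · refine measure_mono_null ?_ (hyperplane_null i)
    rw [show piece K K' S ∩ piece K K' T = piece K K' T ∩ piece K K' S from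

      Set.inter_comm _ _]
    exact piece_subset_hyperplane hK hK' T S i hi.1 hi.2

/-- `Vol(K - K') = Σ_E Vol_{dim E}(P_E K) · Vol_{n - dim E}(P_{E⊥} K')`, summing over
all coordinate subspaces `E`; the volume of the projection is taken inside the
corresponding coordinate subspace (for `E = 0` it is `1` for nonempty sets). -/
theorem volume_sub_antiBlocking {n : ℕ}
    {K K' : Set (EuclideanSpace ℝ (Fin n))}
    (hK : IsAntiBlocking n K) (hK' : IsAntiBlocking n K') :
    volume (K - K') =
      ∑ S : Finset (Fin n), volume (restrictTo S '' K) * volume (restrictTo Sᶜ '' K') := by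
  rw [sub_eq_iUnion hK hK']
  rw [measure_iUnion₀ (piece_aedisjoint hK hK')
    (fun S => (piece_measurable hK.1 hK'.1 S).nullMeasurableSet)]
  rw [tsum_fintype]
  exact Finset.sum_congr rfl fun S _ => vol_piece hK.1 hK'.1 S
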